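/- Fix an integer k ≥ 1 and let P = (P₁,P₂,P₃) : ℝ³ → ℝ³ be a vector field whose components are real polynomials of total degree ≤ k−1. Define u : Ω∞° → ℝ³ (the pullback φ*P of the 1-form P) by u(x,y,z) = ( P₁(φ(x,y,z))/(1+z), P₂(φ(x,y,z))/(1+z), (−x·P₁(φ(x,y,z)) − y·P₂(φ(x,y,z)) + P₃(φ(x,y,z)))/(1+z)² ). Then u belongs to Q^{k−1,k,k}_{k+1} × Q^{k,k−1,k}_{k+1} × Q^{k,k,k−1}_{k+1}, and curl u belongs to Q^{k,k−1,k−1}_{k+2} × Q^{k−1,k,k−1}_{k+2} × Q^{k−1,k−1,k}_{k+2} on Ω∞°. (This is the membership underlying the inclusion P^{k−1} ⊂ U^{(1),k}(Ω) for the H(curl)-conforming pyramidal element.) -/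

import Mathlib

set_option maxHeartbeats 1000000


noncomputable section

/-- The interior `Ω∞° = (0,1) × (0,1) × (0,∞)` of the infinite pyramid. -/
def PyrInfInt : Set (ℝ × ℝ × ℝ) :=
  {p | 0 < p.1 ∧ p.1 < 1 ∧ 0 < p.2.1 ∧ p.2.1 < 1 ∧ 0 < p.2.2}

/-- The projective map `φ(x,y,z) = (x/(1+z), y/(1+z), z/(1+z))`. -/
def phi : ℝ × ℝ × ℝ → ℝ × ℝ × ℝ :=
  fun p => (p.1 / (1 + p.2.2), p.2.1 / (1 + p.2.2), p.2.2 / (1 + p.2.2))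

/-- The weighted monomial `x^a y^b z^c / (1+z)^k`. -/
def qmon (k a b c : ℕ) : ℝ × ℝ × ℝ → ℝ :=
  fun p => p.1 ^ a * p.2.1 ^ b * p.2.2 ^ c / (1 + p.2.2) ^ k

/-- The space `Q^{l,m,n}_k`. -/
def Qsp (l m n : ℤ) (k : ℕ) : Submodule ℝ ((ℝ × ℝ × ℝ) → ℝ) :=
  Submodule.span ℝ
    {f | ∃ a b c : ℕ, (a : ℤ) ≤ l ∧ (b : ℤ) ≤ m ∧ (c : ℤ) ≤ n ∧ f = qmon k a b c}

/-- Evaluation of a three-variable polynomial at `φ(x,y,z)`. -/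
def evalPhi (P : MvPolynomial (Fin 3) ℝ) (p : ℝ × ℝ × ℝ) : ℝ :=
  MvPolynomial.eval ![(phi p).1, (phi p).2.1, (phi p).2.2] P

/-- Partial derivative in `x`. -/
def pdx (f : ℝ × ℝ × ℝ → ℝ) (p : ℝ × ℝ × ℝ) : ℝ := fderiv ℝ f p ((1 : ℝ), (0 : ℝ), (0 : ℝ))

/-- Partial derivative in `y`. -/
def pdy (f : ℝ × ℝ × ℝ → ℝ) (p : ℝ × ℝ × ℝ) : ℝ := fderiv ℝ f p ((0 : ℝ), (1 : ℝ), (0 : ℝ))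

/-- Partial derivative in `z`. -/
def pdz (f : ℝ × ℝ × ℝ → ℝ) (p : ℝ × ℝ × ℝ) : ℝ := fderiv ℝ f p ((0 : ℝ), (0 : ℝ), (1 : ℝ))

/-- First component of the 1-form pullback `φ*P`. -/
def pb1 (P₁ : MvPolynomial (Fin 3) ℝ) : ℝ × ℝ × ℝ → ℝ :=
  fun q => evalPhi P₁ q / (1 + q.2.2)

/-- Second component of the 1-form pullback `φ*P`. -/
def pb2 (P₂ : MvPolynomial (Fin 3) ℝ) : ℝ × ℝ × ℝ → ℝ :=
  fun q => evalPhi P₂ q / (1 + q.2.2)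

/-- Third component of the 1-form pullback `φ*P`. -/
def pb3 (P₁ P₂ P₃ : MvPolynomial (Fin 3) ℝ) : ℝ × ℝ × ℝ → ℝ :=
  fun q => (-(q.1 * evalPhi P₁ q) - q.2.1 * evalPhi P₂ q + evalPhi P₃ q) /
    (1 + q.2.2) ^ 2

open MvPolynomial

/-! ### Auxiliary algebra: expansion of weighted monomials into the reference span -/

lemma qmon_expand (K n a b c : ℕ) (hn1 : 1 ≤ n) (hnK : n ≤ K) :
    qmon n a b c = fun q => ∑ j ∈ Finset.range (K - n + 1),
      ((K-n).choose j : ℝ) * qmon K a b (c+j) q := by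
  funext q
  obtain ⟨x, y, z⟩ := q
  simp only [qmon]
  by_cases hz : 1 + z = 0
  · rw [hz, zero_pow (by omega : n ≠ 0), div_zero, eq_comm, Finset.sum_eq_zero]
    intro j _
    rw [zero_pow (by omega : K ≠ 0), div_zero, mul_zero]
  · have h1 : (1+z)^K = (1+z)^n * (1+z)^(K-n) := by rw [← pow_add]; congr 1; omega
    have h2 : (1+z)^(K-n) = ∑ j ∈ Finset.range (K-n+1), z^j * ((K-n).choose j : ℝ) := by
      rw [add_comm (1:ℝ) z, add_pow]; simp
    rw [eq_comm]
    calc ∑ j ∈ Finset.range (K-n+1), ((K-n).choose j : ℝ) * (x^a*y^b*z^(c+j)/(1+z)^K)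
        = (∑ j ∈ Finset.range (K-n+1), x^a*y^b*z^c*(z^j * ((K-n).choose j:ℝ)))/(1+z)^K := by
          rw [Finset.sum_div]; refine Finset.sum_congr rfl fun j _ => ?_; rw [pow_add]; ring
      _ = (x^a*y^b*z^c*(1+z)^(K-n))/(1+z)^K := by rw [← Finset.mul_sum, ← h2]
      _ = x^a*y^b*z^c/(1+z)^n := by
          rw [h1, mul_comm ((1+z)^n) _, ← div_div, mul_div_assoc,
            div_self (pow_ne_zero _ hz), mul_one]

lemma qmon_mem {l m n' : ℤ} {K n a b c : ℕ} (hn1 : 1 ≤ n) (hnK : n ≤ K)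
    (ha : (a:ℤ) ≤ l) (hb : (b:ℤ) ≤ m) (hc : (c:ℤ) + ((K : ℤ) - n) ≤ n') :
    qmon n a b c ∈ Qsp l m n' K := by
  rw [qmon_expand K n a b c hn1 hnK]
  have h : (fun q => ∑ j ∈ Finset.range (K-n+1), ((K-n).choose j : ℝ) * qmon K a b (c+j) q)
      = ∑ j ∈ Finset.range (K-n+1), ((K-n).choose j : ℝ) • qmon K a b (c+j) := by
    funext q; simp [Finset.sum_apply]
  rw [h]
  refine Submodule.sum_mem _ fun j hj => Submodule.smul_mem _ _ (Submodule.subset_span ?_)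
  refine ⟨a, b, c+j, ha, hb, ?_, rfl⟩
  have hj' := Finset.mem_range.mp hj
  have : (j:ℤ) ≤ (K:ℤ) - n := by omega
  push_cast
  omega

/-! ### The scaled pullback monomial functions `G p j` and their span memberships -/

/-- `G p j = (p ∘ φ) / (1+z)^j`. -/
def G (p : MvPolynomial (Fin 3) ℝ) (j : ℕ) : ℝ×ℝ×ℝ → ℝ := fun q => evalPhi p q / (1+q.2.2)^j

lemma G_expand (p : MvPolynomial (Fin 3) ℝ) (j : ℕ) (hj : 1 ≤ j) :
    G p j = fun q => ∑ m ∈ p.support,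
      p.coeff m * qmon (m 0 + m 1 + m 2 + j) (m 0) (m 1) (m 2) q := by
  funext q
  obtain ⟨x,y,z⟩ := q
  by_cases hz : (1:ℝ) + z = 0
  · simp only [G, qmon]
    rw [hz, zero_pow (by omega : j ≠ 0), div_zero, eq_comm, Finset.sum_eq_zero]
    intro m _
    rw [zero_pow (by omega : m 0 + m 1 + m 2 + j ≠ 0), div_zero, mul_zero]
  · simp only [G, evalPhi, phi, MvPolynomial.eval_eq', Finset.sum_div]
    refine Finset.sum_congr rfl fun m _ => ?_
    rw [Fin.prod_univ_three]
    simp only [Matrix.cons_val_zero, Matrix.cons_val_one, Matrix.head_cons,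
      Matrix.cons_val_two, Matrix.tail_cons]
    simp only [qmon, div_pow]
    rw [pow_add, pow_add, pow_add]
    field_simp

lemma G_mem (p : MvPolynomial (Fin 3) ℝ) {D j K : ℕ} {l m n' : ℤ}
    (hdeg : p.totalDegree ≤ D) (hj : 1 ≤ j) (hDK : D + j ≤ K)
    (hl : (D:ℤ) ≤ l) (hm : (D:ℤ) ≤ m) (hn : (K:ℤ) - j ≤ n') :
    G p j ∈ Qsp l m n' K := by
  rw [G_expand p j hj]
  have h : (fun q => ∑ m ∈ p.support, p.coeff m * qmon (m 0 + m 1 + m 2 + j) (m 0) (m 1) (m 2) q)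
      = ∑ m ∈ p.support, p.coeff m • qmon (m 0 + m 1 + m 2 + j) (m 0) (m 1) (m 2) := by
    funext q; simp [Finset.sum_apply]
  rw [h]
  refine Submodule.sum_mem _ fun mo hmo => Submodule.smul_mem _ _ ?_
  have hd : mo 0 + mo 1 + mo 2 ≤ D := by
    refine le_trans ?_ (le_trans (le_totalDegree hmo) hdeg)
    rw [Finsupp.sum_fintype _ _ (fun _ => rfl), Fin.sum_univ_three]
  exact qmon_mem (by omega) (by omega) (by omega) (by omega) (by push_cast; omega)

lemma Gx_mem (p : MvPolynomial (Fin 3) ℝ) {D j K : ℕ} {l m n' : ℤ}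
    (hdeg : p.totalDegree ≤ D) (hj : 1 ≤ j) (hDK : D + j ≤ K)
    (hl : (D:ℤ) + 1 ≤ l) (hm : (D:ℤ) ≤ m) (hn : (K:ℤ) - j ≤ n') :
    (fun q => q.1 * G p j q) ∈ Qsp l m n' K := by
  have h : (fun q => q.1 * G p j q)
      = ∑ m ∈ p.support, p.coeff m • qmon (m 0 + m 1 + m 2 + j) (m 0 + 1) (m 1) (m 2) := by
    rw [G_expand p j hj]
    funext q
    rw [Finset.mul_sum]
    simp only [Finset.sum_apply, Pi.smul_apply, smul_eq_mul]
    refine Finset.sum_congr rfl fun m _ => ?_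
    simp only [qmon]
    rw [pow_succ]
    ring
  rw [h]
  refine Submodule.sum_mem _ fun mo hmo => Submodule.smul_mem _ _ ?_
  have hd : mo 0 + mo 1 + mo 2 ≤ D := by
    refine le_trans ?_ (le_trans (le_totalDegree hmo) hdeg)
    rw [Finsupp.sum_fintype _ _ (fun _ => rfl), Fin.sum_univ_three]
  exact qmon_mem (by omega) (by omega) (by push_cast; omega) (by omega) (by push_cast; omega)

lemma Gy_mem (p : MvPolynomial (Fin 3) ℝ) {D j K : ℕ} {l m n' : ℤ}
    (hdeg : p.totalDegree ≤ D) (hj : 1 ≤ j) (hDK : D + j ≤ K)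
    (hl : (D:ℤ) ≤ l) (hm : (D:ℤ) + 1 ≤ m) (hn : (K:ℤ) - j ≤ n') :
    (fun q => q.2.1 * G p j q) ∈ Qsp l m n' K := by
  have h : (fun q => q.2.1 * G p j q)
      = ∑ m ∈ p.support, p.coeff m • qmon (m 0 + m 1 + m 2 + j) (m 0) (m 1 + 1) (m 2) := by
    rw [G_expand p j hj]
    funext q
    rw [Finset.mul_sum]
    simp only [Finset.sum_apply, Pi.smul_apply, smul_eq_mul]
    refine Finset.sum_congr rfl fun m _ => ?_
    simp only [qmon]
    rw [pow_succ]
    ring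
  rw [h]
  refine Submodule.sum_mem _ fun mo hmo => Submodule.smul_mem _ _ ?_
  have hd : mo 0 + mo 1 + mo 2 ≤ D := by
    refine le_trans ?_ (le_trans (le_totalDegree hmo) hdeg)
    rw [Finsupp.sum_fintype _ _ (fun _ => rfl), Fin.sum_univ_three]
  exact qmon_mem (by omega) (by omega) (by omega) (by push_cast; omega) (by push_cast; omega)

lemma tdeg_pderiv (i : Fin 3) (p : MvPolynomial (Fin 3) ℝ) :
    (pderiv i p).totalDegree ≤ p.totalDegree := by
  conv_lhs => rw [p.as_sum]
  rw [map_sum]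
  refine (totalDegree_finset_sum _ _).trans (Finset.sup_le fun v hv => ?_)
  rw [pderiv_monomial]
  refine (totalDegree_monomial_le _ _).trans (le_trans ?_ (le_totalDegree hv))
  rw [Finsupp.sum_fintype _ _ (fun _ => rfl), Finsupp.sum_fintype _ _ (fun _ => rfl)]
  refine Finset.sum_le_sum fun j _ => ?_
  simp only [Finsupp.tsub_apply, id]
  exact Nat.sub_le _ _

/-! ### Calculus: canonical derivatives of `evalPhi` and `G` -/

def L1 : (ℝ×ℝ×ℝ) →L[ℝ] ℝ := ContinuousLinearMap.fst ℝ ℝ (ℝ×ℝ)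
def L2 : (ℝ×ℝ×ℝ) →L[ℝ] ℝ :=
  (ContinuousLinearMap.fst ℝ ℝ ℝ).comp (ContinuousLinearMap.snd ℝ ℝ (ℝ×ℝ))
def L3 : (ℝ×ℝ×ℝ) →L[ℝ] ℝ :=
  (ContinuousLinearMap.snd ℝ ℝ ℝ).comp (ContinuousLinearMap.snd ℝ ℝ (ℝ×ℝ))

@[simp] lemma L1_apply (v : ℝ×ℝ×ℝ) : L1 v = v.1 := rfl
@[simp] lemma L2_apply (v : ℝ×ℝ×ℝ) : L2 v = v.2.1 := rfl
@[simp] lemma L3_apply (v : ℝ×ℝ×ℝ) : L3 v = v.2.2 := rfl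

lemma hasFDerivAt_x (q : ℝ×ℝ×ℝ) : HasFDerivAt (fun p : ℝ×ℝ×ℝ => p.1) L1 q := hasFDerivAt_fst
lemma hasFDerivAt_y (q : ℝ×ℝ×ℝ) : HasFDerivAt (fun p : ℝ×ℝ×ℝ => p.2.1) L2 q :=
  hasFDerivAt_fst.comp q hasFDerivAt_snd
lemma hasFDerivAt_z (q : ℝ×ℝ×ℝ) : HasFDerivAt (fun p : ℝ×ℝ×ℝ => p.2.2) L3 q :=
  hasFDerivAt_snd.comp q hasFDerivAt_snd

/-- Canonical derivative of `evalPhi p`. -/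
def EPc (p : MvPolynomial (Fin 3) ℝ) (q : ℝ×ℝ×ℝ) : (ℝ×ℝ×ℝ) →L[ℝ] ℝ :=
  (evalPhi (pderiv 0 p) q / (1+q.2.2)) • L1 + (evalPhi (pderiv 1 p) q / (1+q.2.2)) • L2 +
  ((-(q.1 * evalPhi (pderiv 0 p) q) - q.2.1 * evalPhi (pderiv 1 p) q + evalPhi (pderiv 2 p) q)
    / (1+q.2.2)^2) • L3

lemma evalPhi_add (p1 p2 : MvPolynomial (Fin 3) ℝ) (q : ℝ×ℝ×ℝ) :
    evalPhi (p1 + p2) q = evalPhi p1 q + evalPhi p2 q := by simp [evalPhi]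

lemma evalPhi_sub (p1 p2 : MvPolynomial (Fin 3) ℝ) (q : ℝ×ℝ×ℝ) :
    evalPhi (p1 - p2) q = evalPhi p1 q - evalPhi p2 q := by simp [evalPhi]

lemma evalPhi_mul (p1 p2 : MvPolynomial (Fin 3) ℝ) (q : ℝ×ℝ×ℝ) :
    evalPhi (p1 * p2) q = evalPhi p1 q * evalPhi p2 q := by simp [evalPhi]

lemma evalPhi_X0 (q : ℝ×ℝ×ℝ) : evalPhi (X 0) q = q.1 / (1+q.2.2) := by
  simp [evalPhi, phi]
lemma evalPhi_X1 (q : ℝ×ℝ×ℝ) : evalPhi (X 1) q = q.2.1 / (1+q.2.2) := by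
  simp [evalPhi, phi]
lemma evalPhi_X2 (q : ℝ×ℝ×ℝ) : evalPhi (X 2) q = q.2.2 / (1+q.2.2) := by
  simp [evalPhi, phi]

lemma hasFDerivAt_evalPhi (p : MvPolynomial (Fin 3) ℝ) (q : ℝ×ℝ×ℝ) (hz : 1 + q.2.2 ≠ 0) :
    HasFDerivAt (evalPhi p) (EPc p q) q := by
  have hden : HasFDerivAt (fun r : ℝ×ℝ×ℝ => 1 + r.2.2) L3 q := (hasFDerivAt_z q).const_add 1
  have hinv : HasFDerivAt (fun r : ℝ×ℝ×ℝ => (1 + r.2.2)⁻¹)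
      ((ContinuousLinearMap.smulRight (1 : ℝ →L[ℝ] ℝ) (-((1+q.2.2)^2)⁻¹)).comp L3) q := by
    have h0 : HasDerivAt (fun t : ℝ => t⁻¹) (-((1+q.2.2)^2)⁻¹) (1+q.2.2) := hasDerivAt_inv hz
    exact h0.hasFDerivAt.comp q hden
  induction p using MvPolynomial.induction_on with
  | C a =>
      have h1 : evalPhi (C a) = fun _ : ℝ×ℝ×ℝ => a := funext fun r => by simp [evalPhi]
      have h2 : EPc (C a) q = 0 := by
        refine ContinuousLinearMap.ext fun v => ?_
        simp [EPc, evalPhi]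
      rw [h1, h2]; exact hasFDerivAt_const a q
  | add p1 p2 ih1 ih2 =>
      have h1 : evalPhi (p1+p2) = fun r => evalPhi p1 r + evalPhi p2 r :=
        funext fun r => by simp [evalPhi]
      have h2 : EPc (p1+p2) q = EPc p1 q + EPc p2 q := by
        refine ContinuousLinearMap.ext fun v => ?_
        simp [EPc, evalPhi_add]
        ring
      rw [h1, h2]; exact ih1.add ih2
  | mul_X p i ih =>
      have d10 : pderiv 0 (X 1 : MvPolynomial (Fin 3) ℝ) = 0 := pderiv_X_of_ne (by decide)
      have d12 : pderiv 2 (X 1 : MvPolynomial (Fin 3) ℝ) = 0 := pderiv_X_of_ne (by decide)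
      have d01 : pderiv 1 (X 0 : MvPolynomial (Fin 3) ℝ) = 0 := pderiv_X_of_ne (by decide)
      have d02 : pderiv 2 (X 0 : MvPolynomial (Fin 3) ℝ) = 0 := pderiv_X_of_ne (by decide)
      have d20 : pderiv 0 (X 2 : MvPolynomial (Fin 3) ℝ) = 0 := pderiv_X_of_ne (by decide)
      have d21 : pderiv 1 (X 2 : MvPolynomial (Fin 3) ℝ) = 0 := pderiv_X_of_ne (by decide)
      have h1 : evalPhi (p * X i) = fun r => evalPhi p r * evalPhi (X i) r :=
        funext fun r => by simp [evalPhi]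
      rw [h1]
      fin_cases i
      · have e0 : (fun r : ℝ×ℝ×ℝ => evalPhi (X 0) r) = fun r : ℝ×ℝ×ℝ => r.1 * (1+r.2.2)⁻¹ :=
          funext fun r => by rw [evalPhi_X0, div_eq_mul_inv]
        have hXi := (hasFDerivAt_x q).fun_mul hinv
        rw [← e0] at hXi
        refine (ih.fun_mul hXi).congr_fderiv ?_
        refine ContinuousLinearMap.ext fun v => ?_
        obtain ⟨v1, v2, v3⟩ := v
        simp [EPc, pderiv_mul, evalPhi_add, evalPhi_mul, evalPhi_X0, pderiv_X_self,
          d01, d02, smul_sub]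
        field_simp
        ring
      · have e1 : (fun r : ℝ×ℝ×ℝ => evalPhi (X 1) r) = fun r : ℝ×ℝ×ℝ => r.2.1 * (1+r.2.2)⁻¹ :=
          funext fun r => by rw [evalPhi_X1, div_eq_mul_inv]
        have hXi := (hasFDerivAt_y q).fun_mul hinv
        rw [← e1] at hXi
        refine (ih.fun_mul hXi).congr_fderiv ?_
        refine ContinuousLinearMap.ext fun v => ?_
        obtain ⟨v1, v2, v3⟩ := v
        simp [EPc, pderiv_mul, evalPhi_add, evalPhi_mul, evalPhi_X1, pderiv_X_self,
          d10, d12, smul_sub]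
        field_simp
        ring
      · have e2 : (fun r : ℝ×ℝ×ℝ => evalPhi (X 2) r) = fun r : ℝ×ℝ×ℝ => r.2.2 * (1+r.2.2)⁻¹ :=
          funext fun r => by rw [evalPhi_X2, div_eq_mul_inv]
        have hXi := (hasFDerivAt_z q).fun_mul hinv
        rw [← e2] at hXi
        refine (ih.fun_mul hXi).congr_fderiv ?_
        refine ContinuousLinearMap.ext fun v => ?_
        obtain ⟨v1, v2, v3⟩ := v
        simp [EPc, pderiv_mul, evalPhi_add, evalPhi_mul, evalPhi_X2, pderiv_X_self,
          d20, d21, smul_sub]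
        field_simp
        ring

/-- Canonical derivative of `G p j`. -/
def Gc (p : MvPolynomial (Fin 3) ℝ) (j : ℕ) (q : ℝ×ℝ×ℝ) : (ℝ×ℝ×ℝ) →L[ℝ] ℝ :=
  (evalPhi (pderiv 0 p) q / (1+q.2.2)^(j+1)) • L1 +
  (evalPhi (pderiv 1 p) q / (1+q.2.2)^(j+1)) • L2 +
  ((-(q.1 * evalPhi (pderiv 0 p) q) - q.2.1 * evalPhi (pderiv 1 p) q + evalPhi (pderiv 2 p) q)
      / (1+q.2.2)^(j+2)
    - j * evalPhi p q / (1+q.2.2)^(j+1)) • L3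

lemma hasFDerivAt_G (p : MvPolynomial (Fin 3) ℝ) (j : ℕ) (hj : 1 ≤ j) (q : ℝ×ℝ×ℝ)
    (hz : 1 + q.2.2 ≠ 0) : HasFDerivAt (G p j) (Gc p j q) q := by
  obtain ⟨i, rfl⟩ : ∃ i, j = i + 1 := ⟨j-1, by omega⟩
  have hden : HasFDerivAt (fun r : ℝ×ℝ×ℝ => 1 + r.2.2) L3 q := (hasFDerivAt_z q).const_add 1
  have hne : (1+q.2.2)^(i+1) ≠ 0 := pow_ne_zero _ hz
  have hpinv : HasDerivAt (fun t : ℝ => (t^(i+1))⁻¹)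
      (-(↑(i+1) * (1+q.2.2)^i) / ((1+q.2.2)^(i+1))^2) (1+q.2.2) := by
    have := (hasDerivAt_pow (i+1) (1+q.2.2)).inv hne
    simpa [Pi.inv_def] using this
  have hinvj : HasFDerivAt (fun r : ℝ×ℝ×ℝ => ((1+r.2.2)^(i+1))⁻¹)
      ((ContinuousLinearMap.smulRight (1 : ℝ →L[ℝ] ℝ)
        (-(↑(i+1) * (1+q.2.2)^i) / ((1+q.2.2)^(i+1))^2)).comp L3) q :=
    by rw [ContinuousLinearMap.smulRight_one_eq_toSpanSingleton]; have h := hpinv.hasFDerivAt.comp q hden; exact h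
  have hG : G p (i+1) = fun r => evalPhi p r * ((1+r.2.2)^(i+1))⁻¹ :=
    funext fun r => div_eq_mul_inv _ _
  rw [hG]
  refine ((hasFDerivAt_evalPhi p q hz).fun_mul hinvj).congr_fderiv ?_
  refine ContinuousLinearMap.ext fun v => ?_
  obtain ⟨v1, v2, v3⟩ := v
  simp [Gc, EPc, smul_sub]
  field_simp
  ring

/-- for a polynomial vector field `P = (P₁,P₂,P₃)` of total degree `≤ k−1`,
the 1-form pullback `u = (P₁∘φ/(1+z), P₂∘φ/(1+z), (−x·P₁∘φ − y·P₂∘φ + P₃∘φ)/(1+z)²)`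
belongs componentwise to `Q^{k−1,k,k}_{k+1} × Q^{k,k−1,k}_{k+1} × Q^{k,k,k−1}_{k+1}` on
`Ω∞°`, and `curl u` belongs to
`Q^{k,k−1,k−1}_{k+2} × Q^{k−1,k,k−1}_{k+2} × Q^{k−1,k−1,k}_{k+2}` on `Ω∞°`. -/
theorem pullback_one_form_of_polynomial (k : ℕ) (hk : 1 ≤ k)
    (P₁ P₂ P₃ : MvPolynomial (Fin 3) ℝ)
    (h₁ : P₁.totalDegree ≤ k - 1) (h₂ : P₂.totalDegree ≤ k - 1)
    (h₃ : P₃.totalDegree ≤ k - 1) :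
    ∃ w₁ ∈ Qsp ((k : ℤ) - 1) k k (k + 1),
    ∃ w₂ ∈ Qsp k ((k : ℤ) - 1) k (k + 1),
    ∃ w₃ ∈ Qsp k k ((k : ℤ) - 1) (k + 1),
    ∃ c₁ ∈ Qsp k ((k : ℤ) - 1) ((k : ℤ) - 1) (k + 2),
    ∃ c₂ ∈ Qsp ((k : ℤ) - 1) k ((k : ℤ) - 1) (k + 2),
    ∃ c₃ ∈ Qsp ((k : ℤ) - 1) ((k : ℤ) - 1) k (k + 2),
      ∀ q ∈ PyrInfInt,
        pb1 P₁ q = w₁ q ∧ pb2 P₂ q = w₂ q ∧ pb3 P₁ P₂ P₃ q = w₃ q ∧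
        pdy (pb3 P₁ P₂ P₃) q - pdz (pb2 P₂) q = c₁ q ∧
        pdz (pb1 P₁) q - pdx (pb3 P₁ P₂ P₃) q = c₂ q ∧
        pdx (pb2 P₂) q - pdy (pb1 P₁) q = c₃ q := by
  set W₁ : MvPolynomial (Fin 3) ℝ := pderiv 1 P₃ - pderiv 2 P₂ with hW₁def
  set W₂ : MvPolynomial (Fin 3) ℝ := pderiv 2 P₁ - pderiv 0 P₃ with hW₂def
  set W₃ : MvPolynomial (Fin 3) ℝ := pderiv 0 P₂ - pderiv 1 P₁ with hW₃def
  have hdW₁ : W₁.totalDegree ≤ k - 1 := (totalDegree_sub _ _).trans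
    (max_le ((tdeg_pderiv _ _).trans h₃) ((tdeg_pderiv _ _).trans h₂))
  have hdW₂ : W₂.totalDegree ≤ k - 1 := (totalDegree_sub _ _).trans
    (max_le ((tdeg_pderiv _ _).trans h₁) ((tdeg_pderiv _ _).trans h₃))
  have hdW₃ : W₃.totalDegree ≤ k - 1 := (totalDegree_sub _ _).trans
    (max_le ((tdeg_pderiv _ _).trans h₂) ((tdeg_pderiv _ _).trans h₁))
  -- the third pullback component as a combination of `G`s
  set u3 : ℝ×ℝ×ℝ → ℝ :=
    fun q => -(q.1 * G P₁ 2 q) - q.2.1 * G P₂ 2 q + G P₃ 2 q with hu3def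
  refine ⟨G P₁ 1, G_mem P₁ h₁ (by omega) (by omega) (by omega) (by omega) (by omega),
          G P₂ 1, G_mem P₂ h₂ (by omega) (by omega) (by omega) (by omega) (by omega),
          u3, ?_,
          (fun q => G W₁ 3 q + q.1 * G W₃ 3 q), ?_,
          (fun q => G W₂ 3 q + q.2.1 * G W₃ 3 q), ?_,
          G W₃ 2, G_mem W₃ hdW₃ (by omega) (by omega) (by omega) (by omega) (by omega),
          ?_⟩
  · have e : u3 = (-(fun q => q.1 * G P₁ 2 q) - (fun q => q.2.1 * G P₂ 2 q) + G P₃ 2) := rfl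
    rw [e]
    exact Submodule.add_mem _
      (Submodule.sub_mem _
        (Submodule.neg_mem _
          (Gx_mem P₁ h₁ (by omega) (by omega) (by omega) (by omega) (by omega)))
        (Gy_mem P₂ h₂ (by omega) (by omega) (by omega) (by omega) (by omega)))
      (G_mem P₃ h₃ (by omega) (by omega) (by omega) (by omega) (by omega))
  · have e : (fun q => G W₁ 3 q + q.1 * G W₃ 3 q)
        = (G W₁ 3 + fun q => q.1 * G W₃ 3 q) := rfl
    rw [e]
    exact Submodule.add_mem _
      (G_mem W₁ hdW₁ (by omega) (by omega) (by omega) (by omega) (by omega))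
      (Gx_mem W₃ hdW₃ (by omega) (by omega) (by omega) (by omega) (by omega))
  · have e : (fun q => G W₂ 3 q + q.2.1 * G W₃ 3 q)
        = (G W₂ 3 + fun q => q.2.1 * G W₃ 3 q) := rfl
    rw [e]
    exact Submodule.add_mem _
      (G_mem W₂ hdW₂ (by omega) (by omega) (by omega) (by omega) (by omega))
      (Gy_mem W₃ hdW₃ (by omega) (by omega) (by omega) (by omega) (by omega))
  -- pointwise identities
  intro q hq
  have hzpos : (0:ℝ) < q.2.2 := hq.2.2.2.2
  have hz : 1 + q.2.2 ≠ 0 := by positivity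
  have hpb1 : pb1 P₁ = G P₁ 1 := funext fun r => by simp [pb1, G]
  have hpb2 : pb2 P₂ = G P₂ 1 := funext fun r => by simp [pb2, G]
  -- pb3 agrees with u3 away from z = -1
  have hpb3 : ∀ r : ℝ×ℝ×ℝ, 1 + r.2.2 ≠ 0 → pb3 P₁ P₂ P₃ r = u3 r := by
    intro r hr
    simp only [pb3, hu3def, G]
    field_simp
  have hUopen : IsOpen {r : ℝ×ℝ×ℝ | 1 + r.2.2 ≠ 0} := by
    have : Continuous fun r : ℝ×ℝ×ℝ => 1 + r.2.2 := by fun_prop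
    exact isOpen_ne.preimage this |>.mono (le_refl _) |>.mono (le_refl _)
  have hev : pb3 P₁ P₂ P₃ =ᶠ[nhds q] u3 :=
    Filter.eventuallyEq_of_mem (hUopen.mem_nhds hz) hpb3
  -- derivatives
  have hG1 := hasFDerivAt_G P₁ 2 (by omega) q hz
  have hG2 := hasFDerivAt_G P₂ 2 (by omega) q hz
  have hG3 := hasFDerivAt_G P₃ 2 (by omega) q hz
  have hGP1 := hasFDerivAt_G P₁ 1 (by omega) q hz
  have hGP2 := hasFDerivAt_G P₂ 1 (by omega) q hz
  have hu3 : HasFDerivAt u3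
      ((-(q.1 • Gc P₁ 2 q + G P₁ 2 q • L1) - (q.2.1 • Gc P₂ 2 q + G P₂ 2 q • L2)) + Gc P₃ 2 q)
      q := by
    exact (((hasFDerivAt_x q).mul hG1).neg.sub ((hasFDerivAt_y q).mul hG2)).add hG3
  refine ⟨by rw [hpb1], by rw [hpb2], hpb3 q hz, ?_, ?_, ?_⟩
  · -- c₁
    rw [hpb2, pdy, pdz, hev.fderiv_eq, hu3.fderiv, hGP2.fderiv]
    simp only [ContinuousLinearMap.add_apply, ContinuousLinearMap.coe_sub',
      Pi.sub_apply, ContinuousLinearMap.neg_apply, ContinuousLinearMap.smul_apply,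
      ContinuousLinearMap.coe_smul', Pi.smul_apply, smul_eq_mul, Gc,
      L1_apply, L2_apply, L3_apply, G, evalPhi_sub]
    simp only [hW₁def, hW₃def, evalPhi_sub]
    field_simp
    ring
  · -- c₂
    rw [hpb1, pdz, pdx, hev.fderiv_eq, hu3.fderiv, hGP1.fderiv]
    simp only [ContinuousLinearMap.add_apply, ContinuousLinearMap.coe_sub',
      Pi.sub_apply, ContinuousLinearMap.neg_apply, ContinuousLinearMap.smul_apply,
      ContinuousLinearMap.coe_smul', Pi.smul_apply, smul_eq_mul, Gc,
      L1_apply, L2_apply, L3_apply, G, evalPhi_sub]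
    simp only [hW₂def, hW₃def, evalPhi_sub]
    field_simp
    ring
  · -- c₃
    rw [hpb1, hpb2, pdx, pdy, hGP1.fderiv, hGP2.fderiv]
    simp only [ContinuousLinearMap.add_apply, ContinuousLinearMap.smul_apply,
      smul_eq_mul, Gc, L1_apply, L2_apply, L3_apply, G, evalPhi_sub]
    simp only [hW₃def, evalPhi_sub]
    field_simp
    ring

end
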